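/- Let S be symmetric positive definite and ℓ(Σ) = -log det Σ - tr(Σ^{-1} S). Then for any real c, the superlevel set {Σ positive definite, symmetric : ℓ(Σ) ≥ c} is a compact subset of the space of symmetric matrices. -/

import Mathlib

open Matrix

private lemma aux_log_bound {e l : ℝ} (he : 0 < e) (hl : 0 < l) :
    -Real.log l - e / l ≤ -Real.log e - 1 := by
  have h := Real.log_le_sub_one_of_pos (show (0:ℝ) < e / l from div_pos he hl)
  rw [Real.log_div (ne_of_gt he) (ne_of_gt hl)] at h
  linarith

private lemma aux_upper {e l c' : ℝ} (he : 0 < e) (hl : 0 < l)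
    (h : c' ≤ -Real.log l - e / l) : l ≤ Real.exp (-c') := by
  have h1 : 0 < e / l := div_pos he hl
  have h2 : Real.log l ≤ -c' := by linarith
  calc l = Real.exp (Real.log l) := (Real.exp_log hl).symm
    _ ≤ Real.exp (-c') := Real.exp_le_exp.mpr h2

private lemma aux_lower {e l c' : ℝ} (he : 0 < e) (hl : 0 < l)
    (h : c' ≤ -Real.log l - e / l) :
    0 < -Real.log (e / 2) - 1 - c' ∧ (e / 2) / (-Real.log (e / 2) - 1 - c') ≤ l := by
  have he2 : 0 < e / 2 := by linarith
  have h2 : -Real.log l - (e / 2) / l ≤ -Real.log (e / 2) - 1 := aux_log_bound he2 hl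
  have h3 : e / l = (e / 2) / l + (e / 2) / l := by rw [← add_div]; ring_nf
  have h4 : (e / 2) / l ≤ -Real.log (e / 2) - 1 - c' := by rw [h3] at h; linarith
  have h5 : 0 < (e / 2) / l := div_pos he2 hl
  have hR : 0 < -Real.log (e / 2) - 1 - c' := lt_of_lt_of_le h5 h4
  refine ⟨hR, ?_⟩
  rw [div_le_iff₀ hl] at h4
  rw [div_le_iff₀ hR]
  linarith [h4]

example (x : ℝ) : (RCLike.ofReal x : ℝ) = x := rfl

example {p : ℕ} (A : Matrix (Fin p) (Fin p) ℝ) (h : A.IsHermitian) :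
    (RCLike.ofReal ∘ h.eigenvalues : Fin p → ℝ) = h.eigenvalues := rfl

-- conjugation of r•1 by unitary
private lemma conj_smul_one {p : ℕ} (U : Matrix (Fin p) (Fin p) ℝ)
    (hU : U * star U = 1) (r : ℝ) :
    U * (r • (1 : Matrix (Fin p) (Fin p) ℝ)) * star U = r • 1 := by
  rw [mul_smul_comm, smul_mul_assoc, mul_one, hU]

private lemma sandwich {p : ℕ} {A : Matrix (Fin p) (Fin p) ℝ} (h : A.IsHermitian) {a b : ℝ}
    (ha : ∀ j, a ≤ h.eigenvalues j) (hb : ∀ j, h.eigenvalues j ≤ b) :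
    (A - a • 1).PosSemidef ∧ (b • (1 : Matrix (Fin p) (Fin p) ℝ) - A).PosSemidef := by
  set U : Matrix (Fin p) (Fin p) ℝ := (h.eigenvectorUnitary : Matrix (Fin p) (Fin p) ℝ) with hUdef
  have hU : U * star U = 1 := mem_unitaryGroup_iff.mp h.eigenvectorUnitary.2
  have hspec : A = U * diagonal h.eigenvalues * star U := h.spectral_theorem
  constructor
  · have key : A - a • 1 = U * diagonal (fun i => h.eigenvalues i - a) * star U := by
      have : diagonal (fun i => h.eigenvalues i - a)
          = diagonal h.eigenvalues - a • (1 : Matrix (Fin p) (Fin p) ℝ) := by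
        rw [smul_one_eq_diagonal, diagonal_sub]
      rw [this, Matrix.mul_sub, Matrix.sub_mul, ← hspec, conj_smul_one U hU]
    rw [key, star_eq_conjTranspose U]
    exact Matrix.PosSemidef.mul_mul_conjTranspose_same
      (Matrix.PosSemidef.diagonal (fun i => sub_nonneg.mpr (ha i))) U
  · have key : b • (1 : Matrix (Fin p) (Fin p) ℝ) - A
        = U * diagonal (fun i => b - h.eigenvalues i) * star U := by
      have : diagonal (fun i => b - h.eigenvalues i)
          = b • (1 : Matrix (Fin p) (Fin p) ℝ) - diagonal h.eigenvalues := by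
        rw [smul_one_eq_diagonal, diagonal_sub]
      rw [this, Matrix.mul_sub, Matrix.sub_mul, ← hspec, conj_smul_one U hU]
    rw [key, star_eq_conjTranspose U]
    exact Matrix.PosSemidef.mul_mul_conjTranspose_same
      (Matrix.PosSemidef.diagonal (fun i => sub_nonneg.mpr (hb i))) U

private lemma entries_bound {p : ℕ} {A : Matrix (Fin p) (Fin p) ℝ} {a b : ℝ} (ha : 0 ≤ a)
    (h1 : (A - a • 1).PosSemidef) (h2 : (b • (1 : Matrix (Fin p) (Fin p) ℝ) - A).PosSemidef)
    (i j : Fin p) : A i j ∈ Set.Icc (-b) b := by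
  have hApsd : A.PosSemidef := by
    have := h1.add (Matrix.PosSemidef.diagonal (fun _ : Fin p => ha) :
      (diagonal (fun _ : Fin p => a)).PosSemidef)
    rwa [← smul_one_eq_diagonal, sub_add_cancel] at this
  have hsymm : A j i = A i j := by
    have := congrFun (congrFun hApsd.isHermitian i) j
    simpa [Matrix.conjTranspose_apply] using this
  have hdiag : ∀ k, 0 ≤ A k k ∧ A k k ≤ b := by
    intro k
    have hq1 := hApsd.dotProduct_mulVec_nonneg (Pi.single k 1)
    have hq2 := h2.dotProduct_mulVec_nonneg (Pi.single k 1)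
    have e1 : Pi.single k 1 ⬝ᵥ (A *ᵥ Pi.single k 1) = A k k := by
      simp [Matrix.mulVec_single, single_dotProduct]
    have e2 : Pi.single k 1 ⬝ᵥ ((b • (1 : Matrix (Fin p) (Fin p) ℝ) - A) *ᵥ Pi.single k 1)
        = b - A k k := by
      simp [Matrix.sub_mulVec, Matrix.smul_mulVec, Matrix.one_mulVec,
        Matrix.mulVec_single, dotProduct_sub, single_dotProduct,
        dotProduct_single]
    rw [star_trivial, e1] at hq1
    rw [star_trivial, e2] at hq2
    exact ⟨hq1, by linarith⟩
  have hq3 := hApsd.dotProduct_mulVec_nonneg (Pi.single i 1 + Pi.single j 1)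
  have hq4 := hApsd.dotProduct_mulVec_nonneg (Pi.single i 1 - Pi.single j 1)
  have e3 : (Pi.single i 1 + Pi.single j 1) ⬝ᵥ (A *ᵥ (Pi.single i 1 + Pi.single j 1))
      = A i i + A j i + (A i j + A j j) := by
    simp [Matrix.mulVec_add, Matrix.mulVec_single, dotProduct_add,
      add_dotProduct, single_dotProduct]
  have e4 : (Pi.single i 1 - Pi.single j 1) ⬝ᵥ (A *ᵥ (Pi.single i 1 - Pi.single j 1))
      = A i i - A j i - (A i j - A j j) := by
    simp [Matrix.mulVec_sub, Matrix.mulVec_single, dotProduct_sub,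
      sub_dotProduct, single_dotProduct]
  rw [star_trivial, e3] at hq3
  rw [star_trivial, e4] at hq4
  obtain ⟨hii0, hiib⟩ := hdiag i
  obtain ⟨hjj0, hjjb⟩ := hdiag j
  rw [hsymm] at hq3 hq4
  exact ⟨by linarith, by linarith⟩

-- inverse via spectral theorem
private lemma inv_spectral {p : ℕ} {A : Matrix (Fin p) (Fin p) ℝ} (hA : A.PosDef) :
    A⁻¹ = (hA.1.eigenvectorUnitary : Matrix (Fin p) (Fin p) ℝ)
        * diagonal (fun i => (hA.1.eigenvalues i)⁻¹)
        * star (hA.1.eigenvectorUnitary : Matrix (Fin p) (Fin p) ℝ) := by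
  set U : Matrix (Fin p) (Fin p) ℝ := (hA.1.eigenvectorUnitary : Matrix (Fin p) (Fin p) ℝ) with hUdef
  set lam := hA.1.eigenvalues with hlamdef
  have hU' : star U * U = 1 := mem_unitaryGroup_iff'.mp hA.1.eigenvectorUnitary.2
  have hUU : U * star U = 1 := mem_unitaryGroup_iff.mp hA.1.eigenvectorUnitary.2
  have hpos : ∀ i, 0 < lam i := fun i => hA.eigenvalues_pos i
  have hspec : A = U * diagonal lam * star U := hA.1.spectral_theorem
  clear_value U lam
  apply inv_eq_right_inv
  calc A * (U * diagonal (fun i => (lam i)⁻¹) * star U)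
      = U * (diagonal lam * (star U * U)
          * diagonal (fun i => (lam i)⁻¹)) * star U := by
        rw [hspec]; noncomm_ring
    _ = U * star U := by
        rw [hU', mul_one, diagonal_mul_diagonal]
        have : (fun i => lam i * (lam i)⁻¹) = fun _ => (1:ℝ) := by
          funext i; exact mul_inv_cancel₀ (ne_of_gt (hpos i))
        rw [this, diagonal_one, mul_one]
    _ = 1 := hUU

private lemma trace_lower {p : ℕ} {S A : Matrix (Fin p) (Fin p) ℝ} {e : ℝ}
    (heS : (S - e • 1).PosSemidef) (hA : A.PosDef) :
    ∑ i, e / hA.1.eigenvalues i ≤ (A⁻¹ * S).trace := by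
  set U : Matrix (Fin p) (Fin p) ℝ := (hA.1.eigenvectorUnitary : Matrix (Fin p) (Fin p) ℝ)
  have hU' : star U * U = 1 := mem_unitaryGroup_iff'.mp hA.1.eigenvectorUnitary.2
  set lam := hA.1.eigenvalues with hlam
  -- trace(A⁻¹ S) = ∑ (lam i)⁻¹ * (star U * S * U) i i
  have htr : (A⁻¹ * S).trace = ∑ i, (lam i)⁻¹ * (star U * S * U) i i := by
    rw [inv_spectral hA]
    have h1 : (U * diagonal (fun i => (lam i)⁻¹) * star U) * S
        = U * (diagonal (fun i => (lam i)⁻¹) * (star U * S)) := by noncomm_ring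
    rw [h1, trace_mul_comm]
    have h2 : diagonal (fun i => (lam i)⁻¹) * (star U * S) * U
        = diagonal (fun i => (lam i)⁻¹) * (star U * S * U) := by noncomm_ring
    rw [h2, Matrix.trace]
    apply Finset.sum_congr rfl
    intro i _
    rw [Matrix.diag_apply, diagonal_mul]
  rw [htr]
  -- entry bound : e ≤ (star U * S * U) i i
  have hentry : ∀ i, e ≤ (star U * S * U) i i := by
    intro i
    set x : Fin p → ℝ := fun k => U k i with hx
    have hdot : (star U * S * U) i i = x ⬝ᵥ (S *ᵥ x) := by
      simp only [mul_apply, dotProduct, mulVec, star_apply, star_eq_conjTranspose,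
        conjTranspose_apply, star_trivial, Finset.sum_mul, Finset.mul_sum]
      rw [Finset.sum_comm]
      apply Finset.sum_congr rfl; intro k _
      apply Finset.sum_congr rfl; intro l _
      ring
    have hnorm : x ⬝ᵥ x = 1 := by
      have := congrFun (congrFun hU' i) i
      simp only [mul_apply, one_apply_eq, star_apply, star_trivial] at this
      simpa [dotProduct, hx, mul_comm] using this
    have hq := heS.dotProduct_mulVec_nonneg x
    simp only [star_trivial, Matrix.sub_mulVec, dotProduct_sub, smul_mulVec,
      one_mulVec, dotProduct_smul, smul_eq_mul] at hq
    rw [hdot, hnorm] at *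
    linarith [hq]
  apply Finset.sum_le_sum
  intro i _
  rw [div_eq_inv_mul]
  exact mul_le_mul_of_nonneg_left (hentry i) (inv_nonneg.mpr (le_of_lt (hA.eigenvalues_pos i)))


private lemma eigen_bound {p : ℕ} {S A : Matrix (Fin p) (Fin p) ℝ} {e c : ℝ} (he : 0 < e)
    (heS : (S - e • 1).PosSemidef) (hA : A.PosDef)
    (htrace : ∑ i, e / hA.1.eigenvalues i ≤ (A⁻¹ * S).trace)
    (hc : c ≤ -Real.log A.det - (A⁻¹ * S).trace) (j : Fin p) :
    c - p * (|Real.log e| + 1)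
      ≤ -Real.log (hA.1.eigenvalues j) - e / hA.1.eigenvalues j := by
  set lam := hA.1.eigenvalues with hlamdef
  have hpos : ∀ i, 0 < lam i := fun i => hA.eigenvalues_pos i
  have hdet : Real.log A.det = ∑ i, Real.log (lam i) := by
    rw [hA.1.det_eq_prod_eigenvalues]
    exact Real.log_prod (fun i _ => ne_of_gt (hpos i))
  have hsum : c ≤ ∑ i, (-Real.log (lam i) - e / lam i) := by
    have : c ≤ -Real.log A.det - ∑ i, e / lam i := by linarith
    rw [hdet] at this
    simpa [Finset.sum_sub_distrib, Finset.sum_neg_distrib] using this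
  have hsplit : ∑ i, (-Real.log (lam i) - e / lam i)
      = (∑ i ∈ Finset.univ.erase j, (-Real.log (lam i) - e / lam i))
        + (-Real.log (lam j) - e / lam j) :=
    (Finset.sum_erase_add _ _ (Finset.mem_univ j)).symm
  have hterm : ∀ i ∈ Finset.univ.erase j,
      -Real.log (lam i) - e / lam i ≤ |Real.log e| + 1 := by
    intro i _
    have := aux_log_bound he (hpos i)
    have habs : -Real.log e ≤ |Real.log e| := neg_le_abs _
    linarith
  have herase : ∑ i ∈ Finset.univ.erase j, (-Real.log (lam i) - e / lam i)
      ≤ p * (|Real.log e| + 1) := by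
    have h1 := Finset.sum_le_card_nsmul (Finset.univ.erase j) _ _ hterm
    have hcard : ((Finset.univ.erase j).card : ℝ) ≤ p := by
      have := Finset.card_erase_le (a := j) (s := (Finset.univ : Finset (Fin p)))
      calc ((Finset.univ.erase j).card : ℝ) ≤ (Finset.univ : Finset (Fin p)).card := by
            exact_mod_cast this
        _ = p := by simp
    have hnn : (0:ℝ) ≤ |Real.log e| + 1 := by positivity
    calc ∑ i ∈ Finset.univ.erase j, (-Real.log (lam i) - e / lam i)
        ≤ ((Finset.univ.erase j).card : ℝ) * (|Real.log e| + 1) := by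
          rw [← nsmul_eq_mul]; exact h1
      _ ≤ p * (|Real.log e| + 1) := by
          exact mul_le_mul_of_nonneg_right hcard hnn
  linarith [hsum, hsplit ▸ hsum]


private lemma isClosed_psd {p : ℕ} (B : Matrix (Fin p) (Fin p) ℝ) :
    IsClosed {M : Matrix (Fin p) (Fin p) ℝ | (M - B).PosSemidef} := by
  have hset : {M : Matrix (Fin p) (Fin p) ℝ | (M - B).PosSemidef}
      = {M : Matrix (Fin p) (Fin p) ℝ | (M - B)ᴴ = M - B}
        ∩ ⋂ x : Fin p → ℝ, {M | 0 ≤ star x ⬝ᵥ ((M - B) *ᵥ x)} := by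
    ext M
    simp only [Set.mem_setOf_eq, Set.mem_inter_iff, Set.mem_iInter, Matrix.posSemidef_iff_dotProduct_mulVec,
      Matrix.IsHermitian]
  rw [hset]
  have hcont : Continuous fun M : Matrix (Fin p) (Fin p) ℝ => M - B :=
    continuous_id.sub continuous_const
  refine (isClosed_eq hcont.matrix_conjTranspose hcont).inter (isClosed_iInter fun x => ?_)
  exact isClosed_le continuous_const
    (continuous_const.dotProduct (hcont.matrix_mulVec continuous_const))

private lemma isClosed_psd' {p : ℕ} (B : Matrix (Fin p) (Fin p) ℝ) :
    IsClosed {M : Matrix (Fin p) (Fin p) ℝ | (B - M).PosSemidef} := by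
  have hset : {M : Matrix (Fin p) (Fin p) ℝ | (B - M).PosSemidef}
      = {M : Matrix (Fin p) (Fin p) ℝ | (B - M)ᴴ = B - M}
        ∩ ⋂ x : Fin p → ℝ, {M | 0 ≤ star x ⬝ᵥ ((B - M) *ᵥ x)} := by
    ext M
    simp only [Set.mem_setOf_eq, Set.mem_inter_iff, Set.mem_iInter, Matrix.posSemidef_iff_dotProduct_mulVec,
      Matrix.IsHermitian]
  rw [hset]
  have hcont : Continuous fun M : Matrix (Fin p) (Fin p) ℝ => B - M :=
    continuous_const.sub continuous_id
  refine (isClosed_eq hcont.matrix_conjTranspose hcont).inter (isClosed_iInter fun x => ?_)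
  exact isClosed_le continuous_const
    (continuous_const.dotProduct (hcont.matrix_mulVec continuous_const))

-- global formula for ℓ and its continuity at invertible points
private lemma ell_eq {p : ℕ} (S M : Matrix (Fin p) (Fin p) ℝ) :
    -Real.log M.det - (M⁻¹ * S).trace
      = -Real.log M.det - (((M.det)⁻¹ • M.adjugate) * S).trace := by
  rw [Matrix.inv_def, Ring.inverse_eq_inv']

private lemma ell_contAt {p : ℕ} (S : Matrix (Fin p) (Fin p) ℝ)
    {M : Matrix (Fin p) (Fin p) ℝ} (hdet : M.det ≠ 0) :
    ContinuousAt (fun N : Matrix (Fin p) (Fin p) ℝ =>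
      -Real.log N.det - (((N.det)⁻¹ • N.adjugate) * S).trace) M := by
  have hdetc : Continuous fun N : Matrix (Fin p) (Fin p) ℝ => N.det :=
    continuous_id.matrix_det
  have h1 : ContinuousAt (fun N : Matrix (Fin p) (Fin p) ℝ => Real.log N.det) M :=
    (Real.continuousAt_log hdet).comp hdetc.continuousAt
  have h2 : ContinuousAt (fun N : Matrix (Fin p) (Fin p) ℝ => (N.det)⁻¹) M :=
    hdetc.continuousAt.inv₀ hdet
  have hadj : Continuous fun N : Matrix (Fin p) (Fin p) ℝ => N.adjugate :=
    continuous_id.matrix_adjugate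
  have hsmul : ContinuousAt (fun N : Matrix (Fin p) (Fin p) ℝ =>
      (N.det)⁻¹ • N.adjugate) M := h2.smul hadj.continuousAt
  have hmul : Continuous (fun A : Matrix (Fin p) (Fin p) ℝ => (A * S).trace) :=
    (continuous_id.matrix_mul continuous_const).matrix_trace
  have h3 : ContinuousAt (fun N : Matrix (Fin p) (Fin p) ℝ =>
      (((N.det)⁻¹ • N.adjugate) * S).trace) M := hmul.continuousAt.comp hsmul
  exact h1.neg.sub h3

/-- for symmetric positive definite `S` and
`ℓ(Σ) = -log det Σ - tr(Σ⁻¹ S)`, every superlevel set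
`{Σ pos. def. symmetric : ℓ(Σ) ≥ c}` is compact. -/
theorem superlevel_set_compact {p : ℕ} (S : Matrix (Fin p) (Fin p) ℝ)
    (hS : S.PosDef) (c : ℝ) :
    IsCompact {Sig : Matrix (Fin p) (Fin p) ℝ |
      Sig.PosDef ∧ Sig.IsSymm ∧
        c ≤ -Real.log Sig.det - (Sig⁻¹ * S).trace} := by
  rcases Nat.eq_zero_or_pos p with hp | hp
  · subst hp
    haveI : Subsingleton (Matrix (Fin 0) (Fin 0) ℝ) := ⟨fun a b => by ext i; exact i.elim0⟩
    haveI := Finite.of_subsingleton (α := Matrix (Fin 0) (Fin 0) ℝ)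
    exact (Set.toFinite _).isCompact
  haveI : Nonempty (Fin p) := ⟨⟨0, hp⟩⟩
  -- `e` : smallest eigenvalue of `S`
  set e : ℝ := Finset.univ.inf' Finset.univ_nonempty hS.1.eigenvalues with hedef
  have he : 0 < e := by
    rw [hedef, Finset.lt_inf'_iff]
    exact fun i _ => hS.eigenvalues_pos i
  have heS : (S - e • 1).PosSemidef :=
    (sandwich (a := e) (b := Finset.univ.sup' Finset.univ_nonempty hS.1.eigenvalues) hS.1
      (fun j => Finset.inf'_le _ (Finset.mem_univ j))
      (fun j => Finset.le_sup' _ (Finset.mem_univ j))).1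
  -- the constants
  set c' : ℝ := c - p * (|Real.log e| + 1) with hc'def
  set b : ℝ := Real.exp (-c') with hbdef
  set R : ℝ := -Real.log (e / 2) - 1 - c' with hRdef
  set a : ℝ := (e / 2) / max R 1 with hadef
  have hmaxpos : (0 : ℝ) < max R 1 := lt_of_lt_of_le one_pos (le_max_right _ _)
  have ha : 0 < a := div_pos (by linarith) hmaxpos
  -- eigenvalue bounds for members of the set
  have hkey : ∀ (A : Matrix (Fin p) (Fin p) ℝ) (hA : A.PosDef),
      c ≤ -Real.log A.det - (A⁻¹ * S).trace →
      ∀ j, a ≤ hA.1.eigenvalues j ∧ hA.1.eigenvalues j ≤ b := by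
    intro A hA hcA j
    have htr := trace_lower heS hA
    have hb1 := eigen_bound he heS hA htr hcA j
    rw [← hc'def] at hb1
    have hpos := hA.eigenvalues_pos j
    have hup := aux_upper he hpos hb1
    obtain ⟨hR1, hlow⟩ := aux_lower he hpos hb1
    rw [← hRdef] at hR1 hlow
    refine ⟨?_, hup⟩
    calc a = (e / 2) / max R 1 := hadef
      _ ≤ (e / 2) / R := by gcongr; exact le_max_left _ _
      _ ≤ _ := hlow
  -- the closed/bounded description of the set
  set C : Set (Matrix (Fin p) (Fin p) ℝ) :=
    {M | (M - a • 1).PosSemidef ∧ (b • (1 : Matrix (Fin p) (Fin p) ℝ) - M).PosSemidef ∧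
      M.IsSymm ∧ c ≤ -Real.log M.det - (M⁻¹ * S).trace} with hCdef
  have hpdC : ∀ M : Matrix (Fin p) (Fin p) ℝ, (M - a • 1).PosSemidef → M.PosDef := by
    intro M h1'
    have hsm : (a • (1 : Matrix (Fin p) (Fin p) ℝ)).PosDef := by
      rw [smul_one_eq_diagonal]
      exact posDef_diagonal_iff.mpr fun _ => ha
    have h2' := hsm.add_posSemidef h1'
    have hM : a • (1 : Matrix (Fin p) (Fin p) ℝ) + (M - a • 1) = M := by abel
    rwa [hM] at h2'
  have hCeq : {Sig : Matrix (Fin p) (Fin p) ℝ |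
      Sig.PosDef ∧ Sig.IsSymm ∧ c ≤ -Real.log Sig.det - (Sig⁻¹ * S).trace} = C := by
    ext M
    simp only [hCdef, Set.mem_setOf_eq]
    constructor
    · rintro ⟨hpd, hsym, hc1⟩
      have hbnd := hkey M hpd hc1
      obtain ⟨hps1, hps2⟩ := sandwich hpd.1 (fun j => (hbnd j).1) (fun j => (hbnd j).2)
      exact ⟨hps1, hps2, hsym, hc1⟩
    · rintro ⟨h1', h2', hsym, hc1⟩
      exact ⟨hpdC M h1', hsym, hc1⟩
  -- C is closed
  have hsymm_closed : IsClosed {M : Matrix (Fin p) (Fin p) ℝ | M.IsSymm} :=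
    isClosed_eq continuous_id.matrix_transpose continuous_id
  have hCclosed : IsClosed C := by
    set D : Set (Matrix (Fin p) (Fin p) ℝ) :=
      ({M | (M - a • 1).PosSemidef} ∩ {M | (b • (1 : Matrix (Fin p) (Fin p) ℝ) - M).PosSemidef})
        ∩ {M | M.IsSymm} with hDdef
    have hD : IsClosed D := ((isClosed_psd _).inter (isClosed_psd' _)).inter hsymm_closed
    have hCD : C ⊆ D := fun M hM => ⟨⟨hM.1, hM.2.1⟩, hM.2.2.1⟩
    apply isClosed_of_closure_subset
    intro x hx
    have hxD : x ∈ D := (IsClosed.closure_subset_iff hD).mpr hCD hx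
    obtain ⟨⟨hx1, hx2⟩, hx3⟩ := hxD
    have hxpd : x.PosDef := hpdC x hx1
    have hdet : x.det ≠ 0 := ne_of_gt hxpd.det_pos
    have hF := ell_contAt S hdet
    have hmem := hF.continuousWithinAt.mem_closure_image hx
    have himg : (fun N : Matrix (Fin p) (Fin p) ℝ =>
        -Real.log N.det - (((N.det)⁻¹ • N.adjugate) * S).trace) '' C ⊆ Set.Ici c := by
      rintro _ ⟨y, hy, rfl⟩
      refine Set.mem_Ici.mpr ?_
      have hy4 := hy.2.2.2
      rw [ell_eq S y] at hy4
      exact hy4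
    have hFx := closure_mono himg hmem
    rw [closure_Ici] at hFx
    exact ⟨hx1, hx2, hx3, by rw [ell_eq]; exact hFx⟩
  -- C is contained in a compact box
  have hsub : C ⊆ Set.univ.pi (fun _ : Fin p => Set.univ.pi fun _ : Fin p =>
      Set.Icc (-b) b) := by
    intro M hM
    refine Set.mem_univ_pi.mpr ?_
    intro i
    rw [Set.mem_univ_pi]
    intro j
    exact entries_bound ha.le hM.1 hM.2.1 i j
  have hK : IsCompact (Set.univ.pi (fun _ : Fin p => Set.univ.pi fun _ : Fin p =>
      Set.Icc (-b) b)) :=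
    isCompact_univ_pi fun _ => isCompact_univ_pi fun _ => isCompact_Icc
  rw [hCeq]
  exact hK.of_isClosed_subset hCclosed hsub
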